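/- In the setting of the previous two bounds, let C > 1 and n, εₙ be such that exp(−C·n·εₙ²) ≤ (1/2)·E / max(G, 1). Define Mₙ² = 2C·n·εₙ² and αₙ = exp(−2C·n·εₙ²), and Bₙ = {x : ‖x‖_H ≤ Mₙ and f(x) ≥ αₙ}. Then μ(Bₙᶜ) ≤ exp(−C·n·εₙ²). -/

import Mathlib

open MeasureTheory Real

/-- Sieve bound: with `Mₙ² = 2Cnεₙ²`, `αₙ = exp(−2Cnεₙ²)`, and
`Bₙ = {x : ‖x‖_H ≤ Mₙ ∧ f x ≥ αₙ}`, if `exp(−Cnεₙ²) ≤ (E/2)/max(G,1)`, then the tilted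
mass of `Bₙᶜ` is at most `exp(−Cnεₙ²)`. -/
theorem stmt6 {Ω : Type*} [MeasurableSpace Ω]
    (ν : Measure Ω) [IsProbabilityMeasure ν]
    (f : Ω → ℝ) (hf : Measurable f)
    (h0 : ∀ x, 0 ≤ f x) (h1 : ∀ x, f x ≤ 1)
    (hE : 0 < ∫ x, f x ∂ν)
    (Hnorm : Ω → ℝ) (hH : Measurable Hnorm)
    (hint : Integrable (fun x => exp ((Hnorm x) ^ 2)) ν)
    (G : ℝ) (hG : G = ∫ x, exp ((Hnorm x) ^ 2) ∂ν)
    (C : ℝ) (hC : 1 < C) (n : ℕ) (εn : ℝ) (hε : 0 < εn)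
    (hcond : exp (-(C * n * εn ^ 2)) ≤ (1/2) * (∫ x, f x ∂ν) / max G 1)
    (Mn αn : ℝ) (hMn : 0 < Mn) (hMn2 : Mn ^ 2 = 2 * C * n * εn ^ 2)
    (hαn : αn = exp (-(2 * C * n * εn ^ 2))) :
    (∫ x in {x | Hnorm x ≤ Mn ∧ αn ≤ f x}ᶜ, f x ∂ν) / (∫ x, f x ∂ν) ≤
      exp (-(C * n * εn ^ 2)) := by
  set E := ∫ x, f x ∂ν with hEdef
  set t := exp (-(C * n * εn ^ 2)) with htdef
  have ht : 0 < t := exp_pos _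
  have hfint : Integrable f ν := by
    apply Integrable.mono' (integrable_const 1) hf.aestronglyMeasurable
    filter_upwards with x
    rw [Real.norm_eq_abs, abs_of_nonneg (h0 x)]
    exact h1 x
  set s : Set Ω := {x | Mn < Hnorm x} with hsdef
  set u : Set Ω := {x | f x < αn} with hudef
  have hsm : MeasurableSet s := measurableSet_lt measurable_const hH
  have hum : MeasurableSet u := measurableSet_lt hf measurable_const
  have hsub : {x | Hnorm x ≤ Mn ∧ αn ≤ f x}ᶜ ⊆ s ∪ u := by
    intro x hx
    simp only [Set.mem_compl_iff, Set.mem_setOf_eq, not_and_or, not_le] at hx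
    rcases hx with h | h
    · exact Or.inl h
    · exact Or.inr h
  have hstep1 : (∫ x in {x | Hnorm x ≤ Mn ∧ αn ≤ f x}ᶜ, f x ∂ν) ≤ ∫ x in s ∪ u, f x ∂ν :=
    setIntegral_mono_set hfint.integrableOn (ae_of_all _ h0)
      (HasSubset.Subset.eventuallyLE hsub)
  have hstep2 : (∫ x in s ∪ u, f x ∂ν) ≤ (∫ x in s, f x ∂ν) + ∫ x in u, f x ∂ν := by
    have hle : ν.restrict (s ∪ u) ≤ ν.restrict s + ν.restrict u :=
      Measure.restrict_union_le s u
    have hadd : Integrable f (ν.restrict s + ν.restrict u) :=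
      Integrable.add_measure hfint.integrableOn hfint.integrableOn
    calc (∫ x in s ∪ u, f x ∂ν) ≤ ∫ x, f x ∂(ν.restrict s + ν.restrict u) :=
          integral_mono_measure hle (ae_of_all _ h0) hadd
      _ = (∫ x in s, f x ∂ν) + ∫ x in u, f x ∂ν := integral_add_measure
          hfint.integrableOn hfint.integrableOn
  have hαpos : 0 < αn := hαn ▸ exp_pos _
  have hstep3 : (∫ x in u, f x ∂ν) ≤ αn := by
    calc (∫ x in u, f x ∂ν) ≤ ∫ _x in u, αn ∂ν := by
          apply setIntegral_mono_on hfint.integrableOn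
            (integrableOn_const (measure_ne_top _ _)) hum
          intro x hx
          exact le_of_lt hx
      _ = (ν u).toReal * αn := by rw [setIntegral_const, smul_eq_mul]; rfl
      _ ≤ 1 * αn := by
          gcongr
          simpa using ENNReal.toReal_mono ENNReal.one_ne_top prob_le_one
      _ = αn := one_mul _
  have hstep4 : (∫ x in s, f x ∂ν) ≤ G * exp (-(Mn ^ 2)) := by
    have hpt : ∀ x ∈ s, f x ≤ exp ((Hnorm x) ^ 2) * exp (-(Mn ^ 2)) := by
      intro x hx
      rw [← exp_add]
      have hx' : Mn < Hnorm x := hx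
      have hsq : Mn ^ 2 ≤ (Hnorm x) ^ 2 := by nlinarith
      calc f x ≤ 1 := h1 x
        _ ≤ exp ((Hnorm x) ^ 2 + -(Mn ^ 2)) := one_le_exp (by linarith)
    calc (∫ x in s, f x ∂ν) ≤ ∫ x in s, exp ((Hnorm x) ^ 2) * exp (-(Mn ^ 2)) ∂ν :=
          setIntegral_mono_on hfint.integrableOn
            ((hint.mul_const _).integrableOn) hsm hpt
      _ = (∫ x in s, exp ((Hnorm x) ^ 2) ∂ν) * exp (-(Mn ^ 2)) := integral_mul_const _ _
      _ ≤ (∫ x, exp ((Hnorm x) ^ 2) ∂ν) * exp (-(Mn ^ 2)) := by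
          gcongr
          · exact ae_of_all _ fun x => (exp_pos _).le
          · exact Measure.restrict_le_self
      _ = G * exp (-(Mn ^ 2)) := by rw [hG]
  have hkey : (∫ x in {x | Hnorm x ≤ Mn ∧ αn ≤ f x}ᶜ, f x ∂ν) ≤ G * t ^ 2 + t ^ 2 := by
    have hsq : ∀ a : ℝ, exp (-(2 * a)) = exp (-a) ^ 2 := by
      intro a
      rw [sq, ← exp_add]
      congr 1
      ring
    have h1' : exp (-(Mn ^ 2)) = t ^ 2 := by
      rw [hMn2, htdef, show 2 * C * (n:ℝ) * εn ^ 2 = 2 * (C * n * εn ^ 2) by ring, hsq]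
    have h2' : αn = t ^ 2 := by
      rw [hαn, htdef, show 2 * C * (n:ℝ) * εn ^ 2 = 2 * (C * n * εn ^ 2) by ring, hsq]
    calc (∫ x in {x | Hnorm x ≤ Mn ∧ αn ≤ f x}ᶜ, f x ∂ν)
        ≤ (∫ x in s, f x ∂ν) + ∫ x in u, f x ∂ν := hstep1.trans hstep2
      _ ≤ G * exp (-(Mn ^ 2)) + αn := add_le_add hstep4 hstep3
      _ = G * t ^ 2 + t ^ 2 := by rw [h1', h2']
  rw [div_le_iff₀ hE]
  have hmax : (0:ℝ) < max G 1 := lt_of_lt_of_le one_pos (le_max_right _ _)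
  have hcond' : t * max G 1 ≤ (1/2) * E := by
    rw [← le_div_iff₀ hmax]
    exact hcond
  have hG1 : G ≤ max G 1 := le_max_left _ _
  have h1m : (1:ℝ) ≤ max G 1 := le_max_right _ _
  nlinarith [sq_nonneg t, mul_pos ht hmax, hkey]
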